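/- For online gradient descent on a bounded convex set F with L-Lipschitz convex cost functions, if the state is updated every step but only 'revealed' (used) at multiples of B (i.e., the frozen algorithm plays f'_t = f_{⌊t/B⌋·B}), then with learning rate η = radius(F)/(L·√(TB)), the regret of the frozen algorithm over T steps is at most radius(F)·L·√(TB). -/

import Mathlib

open RealInnerProductSpace

section aux
variable {E : Type*} [NormedAddCommGroup E] [InnerProductSpace ℝ E]

lemma aux_proj_contract {F : Set E} (hF : Convex ℝ F) (p y x : E) (hp : p ∈ F) (hx : x ∈ F)
    (hmin : ∀ g ∈ F, ‖p - y‖ ≤ ‖g - y‖) : ‖p - x‖ ≤ ‖y - x‖ := by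
  have key : ⟪y - p, x - p⟫ ≤ 0 := by
    by_contra hcon
    push_neg at hcon
    set a := ⟪y - p, x - p⟫ with ha
    have hxp : x - p ≠ 0 := by
      intro h0
      rw [ha, h0, inner_zero_right] at hcon
      exact lt_irrefl 0 hcon
    have hb : (0:ℝ) < ‖x - p‖^2 := by
      have := norm_pos_iff.mpr hxp
      positivity
    set t : ℝ := min 1 (a / ‖x - p‖^2) with htdef
    have ht0 : 0 < t := lt_min one_pos (div_pos hcon hb)
    have ht1 : t ≤ 1 := min_le_left _ _
    have hz : p + t • (x - p) ∈ F := by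
      have hmem := hF hp hx (by linarith : (0:ℝ) ≤ 1 - t) ht0.le (by ring)
      have : (1 - t) • p + t • x = p + t • (x - p) := by
        rw [sub_smul, one_smul, smul_sub]; abel
      rwa [this] at hmem
    have h2 := hmin _ hz
    have h3 : ‖p - y‖^2 ≤ ‖p + t • (x - p) - y‖^2 := by
      have := norm_nonneg (p - y)
      nlinarith [h2]
    have hexp : ‖p + t • (x - p) - y‖^2
        = ‖p - y‖^2 - 2 * (t * a) + t^2 * ‖x - p‖^2 := by
      have : p + t • (x - p) - y = (p - y) + t • (x - p) := by abel
      rw [this, norm_add_sq_real, real_inner_smul_right, norm_smul]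
      have : ⟪p - y, x - p⟫ = -a := by
        rw [ha, ← inner_neg_left]; congr 1; abel
      rw [this]
      simp [Real.norm_eq_abs, mul_pow, sq_abs]
      ring
    have h4 : 2 * a ≤ t * ‖x - p‖^2 := by
      rw [hexp] at h3
      nlinarith [ht0]
    have h5 : t * ‖x - p‖^2 ≤ a := by
      calc t * ‖x - p‖^2 ≤ (a / ‖x - p‖^2) * ‖x - p‖^2 := by
            apply mul_le_mul_of_nonneg_right (min_le_right _ _) hb.le
        _ = a := by field_simp
    linarith
  have hexp2 : ‖y - x‖^2 = ‖y - p‖^2 - 2 * ⟪y - p, x - p⟫ + ‖x - p‖^2 := by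
    have : y - x = (y - p) - (x - p) := by abel
    rw [this, norm_sub_sq_real]
  have h6 : ‖p - x‖^2 ≤ ‖y - x‖^2 := by
    have : ‖p - x‖ = ‖x - p‖ := norm_sub_rev _ _
    rw [this, hexp2]
    nlinarith [sq_nonneg ‖y - p‖]
  nlinarith [norm_nonneg (p - x), norm_nonneg (y - x)]

lemma aux_grad_ineq [CompleteSpace E] {F : Set E} {f : E → ℝ} (hc : ConvexOn ℝ F f)
    {g y x : E} (hg : HasGradientAt f g y) (hy : y ∈ F) (hx : x ∈ F) :
    f y - f x ≤ ⟪g, y - x⟫ := by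
  set A : ℝ →ᵃ[ℝ] E := AffineMap.lineMap y x with hA
  have hφconv : ConvexOn ℝ (A ⁻¹' F) (f ∘ A) := hc.comp_affineMap A
  have h0 : (0:ℝ) ∈ A ⁻¹' F := by
    simp only [Set.mem_preimage, hA, AffineMap.lineMap_apply_zero]; exact hy
  have h1 : (1:ℝ) ∈ A ⁻¹' F := by
    simp only [Set.mem_preimage, hA, AffineMap.lineMap_apply_one]; exact hx
  have hAfun : ∀ s : ℝ, A s = s • (x - y) + y := by
    intro s; simp [hA, AffineMap.lineMap_apply, vsub_eq_sub, vadd_eq_add]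
  have hDA : HasDerivAt (fun s : ℝ => s • (x - y) + y) (x - y) 0 := by
    have h := ((hasDerivAt_id (0:ℝ)).smul_const (x - y)).add_const y
    simpa using h
  have hD : HasDerivAt (f ∘ A) ⟪g, x - y⟫ 0 := by
    have hf' := hg.hasFDerivAt
    have hf'' : HasFDerivAt f ((InnerProductSpace.toDual ℝ E) g) ((0:ℝ) • (x - y) + y) := by
      simpa using hf'
    have hcomp := hf''.comp_hasDerivAt (x := (0:ℝ))
      (f := fun s : ℝ => s • (x - y) + y) hDA
    have : (InnerProductSpace.toDual ℝ E g) (x - y) = ⟪g, x - y⟫ := by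
      simp [InnerProductSpace.toDual_apply_apply]
    rw [← this]
    refine HasDerivAt.congr_of_eventuallyEq hcomp ?_
    filter_upwards with s
    simp [Function.comp, hAfun]
  have hslope := hφconv.le_slope_of_hasDerivAt h0 h1 one_pos hD
  have hs : slope (f ∘ A) 0 1 = f x - f y := by
    rw [slope_def_field]
    simp [Function.comp, hA, AffineMap.lineMap_apply_zero, AffineMap.lineMap_apply_one]
  rw [hs] at hslope
  have : ⟪g, y - x⟫ = -⟪g, x - y⟫ := by
    rw [← inner_neg_right]; congr 1; abel
  linarith [hslope, this.ge, this.le, (by linarith [hslope] : f y - f x ≤ -⟪g, x - y⟫)]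

lemma aux_modsum (B : ℕ) (hB : 0 < B) (T : ℕ) :
    2 * (∑ t ∈ Finset.range T, t % B) + (T % B) * (B - T % B) = T * (B - 1) := by
  rcases Nat.eq_or_lt_of_le hB with hB1 | hB2
  · cases hB1
    simp [Nat.mod_one]
  induction T with
  | zero => simp
  | succ n ih =>
    rw [Finset.sum_range_succ]
    have hr : n % B < B := Nat.mod_lt _ hB
    have hsucc : (n + 1) % B = if n % B + 1 = B then 0 else n % B + 1 := by
      rw [Nat.add_mod, Nat.mod_eq_of_lt hB2]
      split_ifs with h
      · rw [h, Nat.mod_self]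
      · exact Nat.mod_eq_of_lt (by omega)
    rw [hsucc]
    split_ifs with h
    · have e1 : B - n % B = 1 := by omega
      rw [e1, mul_one] at ih
      have e2 : (n+1) * (B-1) = n * (B-1) + (B-1) := Nat.succ_mul n (B-1)
      rw [e2, zero_mul]
      generalize n * (B - 1) = m at ih ⊢
      omega
    · obtain ⟨b, hb⟩ : ∃ b, B = n % B + b + 1 := ⟨B - n % B - 1, by omega⟩
      have e1 : B - n % B = b + 1 := by omega
      have e2 : B - (n % B + 1) = b := by omega
      have e3 : B - 1 = n % B + b := by omega
      rw [e1] at ih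
      rw [e2, e3]
      rw [e3] at ih
      zify at ih ⊢
      linear_combination ih

end aux

theorem frozen_ogd_regret
    {N : ℕ} (T B : ℕ) (hT : 0 < T) (hB : 0 < B)
    (F : Set (EuclideanSpace ℝ (Fin N))) (hFconv : Convex ℝ F) (hFclosed : IsClosed F)
    (L R : ℝ) (hL : 0 < L) (hR : 0 ≤ R)
    (c : ℕ → EuclideanSpace ℝ (Fin N) → ℝ)
    (hconv : ∀ t, ConvexOn ℝ F (c t))
    (hlip : ∀ t, LipschitzWith (Real.toNNReal L) (c t))
    (gc : ℕ → EuclideanSpace ℝ (Fin N) → EuclideanSpace ℝ (Fin N))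
    (hgrad : ∀ t x, HasGradientAt (c t) (gc t x) x)
    -- Euclidean projection onto F
    (proj : EuclideanSpace ℝ (Fin N) → EuclideanSpace ℝ (Fin N))
    (hprojmem : ∀ y, proj y ∈ F)
    (hprojmin : ∀ y, ∀ g ∈ F, ‖proj y - y‖ ≤ ‖g - y‖)
    -- f0 attains the radius R of F
    (f0 : EuclideanSpace ℝ (Fin N)) (hf0 : f0 ∈ F)
    (hrad : ∀ g ∈ F, ‖f0 - g‖ ≤ R)
    (hradmin : ∀ h ∈ F, ∃ g ∈ F, R ≤ ‖h - g‖)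
    -- learning rate
    (η : ℝ) (hη : η = R / (L * Real.sqrt ((T : ℝ) * B)))
    -- iterates
    (f : ℕ → EuclideanSpace ℝ (Fin N))
    (hfzero : f 0 = f0)
    (hfstep : ∀ t, f (t + 1) = proj (f t - η • gc t (f t))) :
    ∀ x ∈ F,
      (∑ t ∈ Finset.range T, c t (f (t / B * B))) - ∑ t ∈ Finset.range T, c t x
        ≤ R * L * Real.sqrt ((T : ℝ) * B) := by
  intro x hx
  have hmem : ∀ t, f t ∈ F := by
    intro t
    cases t with
    | zero => rw [hfzero]; exact hf0
    | succ n => rw [hfstep n]; exact hprojmem _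
  rcases hR.eq_or_lt with hR0 | hRpos
  · -- degenerate case R = 0
    have hηz : η = 0 := by rw [hη, ← hR0]; simp
    have hfix : ∀ g ∈ F, g = f0 := by
      intro g hg
      have := hrad g hg
      rw [← hR0] at this
      have h0 : f0 - g = 0 := by
        have := norm_le_zero_iff.mp this
        exact this
      have : f0 = g := by
        have := sub_eq_zero.mp h0; exact this
      exact this.symm
    have hconst : ∀ t, f t = f0 := by
      intro t
      induction t with
      | zero => exact hfzero
      | succ n ih =>
        rw [hfstep n, ih, hηz]
        simp only [zero_smul, sub_zero]
        exact hfix _ (hprojmem f0)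
    have hxeq : x = f0 := hfix x hx
    have : ∀ t ∈ Finset.range T, c t (f (t / B * B)) = c t x := by
      intro t _
      rw [hconst, hxeq]
    rw [Finset.sum_congr rfl this, sub_self, ← hR0]
    simp
  -- main case R > 0
  have hTB : (0:ℝ) < (T:ℝ) * B :=
    mul_pos (by exact_mod_cast hT) (by exact_mod_cast hB)
  set Sq : ℝ := Real.sqrt ((T:ℝ) * B) with hSqdef
  have hSqpos : 0 < Sq := Real.sqrt_pos.mpr hTB
  have hSq2 : Sq ^ 2 = (T:ℝ) * B := Real.sq_sqrt hTB.le
  have hηpos : 0 < η := by rw [hη]; positivity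
  have hgn : ∀ t u, ‖gc t u‖ ≤ L := by
    intro t u
    have h1 := (hgrad t u).hasFDerivAt.le_of_lipschitz (hlip t)
    calc ‖gc t u‖ = ‖(InnerProductSpace.toDual ℝ (EuclideanSpace ℝ (Fin N))) (gc t u)‖ :=
          ((InnerProductSpace.toDual ℝ (EuclideanSpace ℝ (Fin N))).norm_map (gc t u)).symm
      _ ≤ (Real.toNNReal L : ℝ) := h1
      _ = L := Real.coe_toNNReal L hL.le
  have hcontr : ∀ y x', x' ∈ F → ‖proj y - x'‖ ≤ ‖y - x'‖ := fun y x' hx' =>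
    aux_proj_contract hFconv (proj y) y x' (hprojmem y) hx' (hprojmin y)
  have hstep : ∀ u, ‖f (u + 1) - f u‖ ≤ η * L := by
    intro u
    rw [hfstep u]
    calc ‖proj (f u - η • gc u (f u)) - f u‖ ≤ ‖(f u - η • gc u (f u)) - f u‖ :=
          hcontr _ _ (hmem u)
      _ = η * ‖gc u (f u)‖ := by
          rw [sub_sub_cancel_left, norm_neg, norm_smul, Real.norm_eq_abs,
            abs_of_pos hηpos]
      _ ≤ η * L := mul_le_mul_of_nonneg_left (hgn u (f u)) hηpos.le
  have hdrift : ∀ s k, ‖f (s + k) - f s‖ ≤ (k:ℝ) * (η * L) := by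
    intro s k
    induction k with
    | zero => simp
    | succ m ih =>
      calc ‖f (s + (m + 1)) - f s‖
          ≤ ‖f (s + m + 1) - f (s + m)‖ + ‖f (s + m) - f s‖ := by
            rw [show s + (m + 1) = s + m + 1 from rfl]
            exact norm_sub_le_norm_sub_add_norm_sub _ _ _
        _ ≤ η * L + (m:ℝ) * (η * L) := add_le_add (hstep _) ih
        _ = ((m:ℝ) + 1) * (η * L) := by ring
        _ = ((m + 1 : ℕ):ℝ) * (η * L) := by push_cast; ring
  have key : ∀ t, c t (f (t / B * B)) - c t x ≤
      (‖f t - x‖^2 - ‖f (t+1) - x‖^2) / (2*η) + η * L^2/2 + ((t % B : ℕ):ℝ) * (η * L^2) := by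
    intro t
    have hA : c t (f t) - c t x ≤ ⟪gc t (f t), f t - x⟫ :=
      aux_grad_ineq (hconv t) (hgrad t (f t)) (hmem t) hx
    have hB2 : ‖f (t+1) - x‖^2 ≤ ‖f t - x‖^2 - 2*η*⟪gc t (f t), f t - x⟫ + η^2 * L^2 := by
      have h2 : ‖f (t+1) - x‖ ≤ ‖(f t - η • gc t (f t)) - x‖ := by
        rw [hfstep t]; exact hcontr _ _ hx
      have hexp : ‖(f t - η • gc t (f t)) - x‖^2
          = ‖f t - x‖^2 - 2*η*⟪gc t (f t), f t - x⟫ + η^2 * ‖gc t (f t)‖^2 := by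
        have e : (f t - η • gc t (f t)) - x = (f t - x) - η • gc t (f t) := by abel
        rw [e, norm_sub_sq_real, real_inner_smul_right, norm_smul, Real.norm_eq_abs,
          mul_pow, sq_abs, real_inner_comm]
        ring
      have hg2 : η^2 * ‖gc t (f t)‖^2 ≤ η^2 * L^2 :=
        mul_le_mul_of_nonneg_left
          (pow_le_pow_left₀ (norm_nonneg _) (hgn t (f t)) 2) (sq_nonneg η)
      nlinarith [norm_nonneg (f (t+1) - x), norm_nonneg ((f t - η • gc t (f t)) - x), h2]
    have hinner : ⟪gc t (f t), f t - x⟫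
        ≤ (‖f t - x‖^2 - ‖f (t+1) - x‖^2) / (2*η) + η * L^2/2 := by
      rw [div_add' _ _ _ (by positivity : (2*η) ≠ 0), le_div_iff₀ (by positivity : (0:ℝ) < 2*η)]
      nlinarith [hB2]
    have hC : c t (f (t / B * B)) - c t (f t) ≤ ((t % B : ℕ):ℝ) * (η * L^2) := by
      have hl : t / B * B + t % B = t := by
        rw [mul_comm]; exact Nat.div_add_mod t B
      have hd : ‖f t - f (t / B * B)‖ ≤ ((t % B : ℕ):ℝ) * (η * L) := by
        have := hdrift (t / B * B) (t % B)
        rw [hl] at this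
        exact this
      have hlipt := (hlip t).dist_le_mul (f (t / B * B)) (f t)
      rw [Real.dist_eq, Real.coe_toNNReal L hL.le] at hlipt
      have hdist : dist (f (t / B * B)) (f t) = ‖f t - f (t / B * B)‖ := by
        rw [dist_eq_norm, norm_sub_rev]
      rw [hdist] at hlipt
      calc c t (f (t / B * B)) - c t (f t) ≤ |c t (f (t / B * B)) - c t (f t)| := le_abs_self _
        _ ≤ L * ‖f t - f (t / B * B)‖ := hlipt
        _ ≤ L * (((t % B : ℕ):ℝ) * (η * L)) :=
            mul_le_mul_of_nonneg_left hd hL.le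
        _ = ((t % B : ℕ):ℝ) * (η * L^2) := by ring
    calc c t (f (t / B * B)) - c t x
        = (c t (f (t / B * B)) - c t (f t)) + (c t (f t) - c t x) := by ring
      _ ≤ ((t % B : ℕ):ℝ) * (η * L^2) + ⟪gc t (f t), f t - x⟫ := add_le_add hC hA
      _ ≤ ((t % B : ℕ):ℝ) * (η * L^2)
            + ((‖f t - x‖^2 - ‖f (t+1) - x‖^2) / (2*η) + η * L^2/2) :=
          add_le_add_right hinner _
      _ = (‖f t - x‖^2 - ‖f (t+1) - x‖^2) / (2*η) + η * L^2/2
            + ((t % B : ℕ):ℝ) * (η * L^2) := by ring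
  -- sum up
  have hsum : (∑ t ∈ Finset.range T, c t (f (t / B * B))) - ∑ t ∈ Finset.range T, c t x
      ≤ R^2 / (2*η) + (T:ℝ) * (η * L^2/2) + ((T:ℝ) * ((B:ℝ) - 1) / 2) * (η * L^2) := by
    rw [← Finset.sum_sub_distrib]
    have h1 := Finset.sum_le_sum (fun t (_ : t ∈ Finset.range T) => key t)
    refine h1.trans ?_
    rw [Finset.sum_add_distrib, Finset.sum_add_distrib]
    have htel : ∑ t ∈ Finset.range T, (‖f t - x‖^2 - ‖f (t+1) - x‖^2) / (2*η)
        ≤ R^2 / (2*η) := by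
      rw [← Finset.sum_div]
      apply div_le_div_of_nonneg_right ?_ (by positivity)
      rw [Finset.sum_range_sub' (fun t => ‖f t - x‖^2) T]
      have h0 : ‖f 0 - x‖^2 ≤ R^2 := by
        rw [hfzero]
        exact pow_le_pow_left₀ (norm_nonneg _) (hrad x hx) 2
      nlinarith [sq_nonneg ‖f T - x‖]
    have hconst : ∑ _t ∈ Finset.range T, η * L^2/2 = (T:ℝ) * (η * L^2/2) := by
      rw [Finset.sum_const, Finset.card_range, nsmul_eq_mul]
    have hmodsum : ∑ t ∈ Finset.range T, ((t % B : ℕ):ℝ) * (η * L^2)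
        ≤ ((T:ℝ) * ((B:ℝ) - 1) / 2) * (η * L^2) := by
      rw [← Finset.sum_mul]
      apply mul_le_mul_of_nonneg_right ?_ (by positivity)
      have hnat : 2 * (∑ t ∈ Finset.range T, t % B) ≤ T * (B - 1) := by
        have := aux_modsum B hB T
        omega
      have hcast : ((2 * (∑ t ∈ Finset.range T, t % B) : ℕ):ℝ) ≤ ((T * (B-1) : ℕ):ℝ) := by
        exact_mod_cast hnat
      push_cast [Nat.cast_sub hB] at hcast
      linarith
    rw [hconst]
    exact add_le_add (add_le_add htel le_rfl) hmodsum
  have hS0 : Sq ≠ 0 := hSqpos.ne'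
  have hL0 : L ≠ 0 := hL.ne'
  have hR0' : R ≠ 0 := hRpos.ne'
  have e1 : R^2/(2*η) = R*L*Sq/2 := by rw [hη]; field_simp
  have e2 : η * L^2 = R*L/Sq := by rw [hη]; field_simp
  refine hsum.trans (le_of_eq ?_)
  rw [e1, e2]
  field_simp
  linear_combination (-1) * hSq2
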